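/- Let 𝕃 ⊆ ℝ be such that (𝕃, +) is a subgroup of (ℝ, +) and ℤ ⊆ 𝕃. Let A be an integer m×n matrix whose columns are a¹, …, aⁿ ∈ ℤᵐ. If every vector of 𝕃ᵐ that is a nonnegative combination of a¹, …, aⁿ can be written as a nonnegative combination of a¹, …, aⁿ with coefficients in 𝕃, then every vector of 𝕃ᵐ that is a linear combination of a¹, …, aⁿ can be written as a linear combination of a¹, …, aⁿ with coefficients in 𝕃. -/
import Mathlib


/-- Every `𝕃`-generating set for a cone is an `𝕃`-generating set for a subspace:
if every vector of `𝕃ᵐ` in the conic hull of the columns `a¹, …, aⁿ` of an integer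
matrix is a conic combination with coefficients in `𝕃`, then every vector of `𝕃ᵐ`
in their linear hull is a linear combination with coefficients in `𝕃`. -/
theorem GSC_is_GSS {m n : ℕ} (𝕃 : Set ℝ)
    (hsub : ∃ H : AddSubgroup ℝ, (H : Set ℝ) = 𝕃)
    (hZ : ∀ z : ℤ, (z : ℝ) ∈ 𝕃)
    (a : Fin n → Fin m → ℤ)
    (hGSC : ∀ b : Fin m → ℝ, (∀ i, b i ∈ 𝕃) →
      (∃ c : Fin n → ℝ, (∀ j, 0 ≤ c j) ∧ ∀ i, b i = ∑ j, c j * (a j i : ℝ)) →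
      ∃ c : Fin n → ℝ, (∀ j, c j ∈ 𝕃) ∧ (∀ j, 0 ≤ c j) ∧
        ∀ i, b i = ∑ j, c j * (a j i : ℝ)) :
    ∀ b : Fin m → ℝ, (∀ i, b i ∈ 𝕃) →
      (∃ c : Fin n → ℝ, ∀ i, b i = ∑ j, c j * (a j i : ℝ)) →
      ∃ c : Fin n → ℝ, (∀ j, c j ∈ 𝕃) ∧ ∀ i, b i = ∑ j, c j * (a j i : ℝ) := by
  obtain ⟨H, rfl⟩ := hsub
  rintro b hb ⟨c, hc⟩
  -- choose an integer N with N ≥ -c j for every j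
  set N : ℤ := ⌈∑ j, |c j|⌉ with hN
  have hNc : ∀ j, 0 ≤ c j + (N : ℝ) := by
    intro j
    have h1 : -c j ≤ ∑ j, |c j| := by
      calc -c j ≤ |c j| := neg_le_abs _
        _ ≤ ∑ j, |c j| := Finset.single_le_sum (fun j _ => abs_nonneg (c j)) (Finset.mem_univ j)
    have h2 : (∑ j, |c j|) ≤ (N : ℝ) := Int.le_ceil _
    linarith
  -- the shifted vector d = b + N · (sum of columns)
  set d : Fin m → ℝ := fun i => b i + (N : ℝ) * ∑ j, (a j i : ℝ) with hd
  have hdL : ∀ i, d i ∈ H := by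
    intro i
    have : ((N * ∑ j, a j i : ℤ) : ℝ) ∈ H := hZ _
    have heq : (N : ℝ) * ∑ j, (a j i : ℝ) = ((N * ∑ j, a j i : ℤ) : ℝ) := by push_cast; ring
    show b i + (N : ℝ) * ∑ j, (a j i : ℝ) ∈ H
    rw [heq]
    exact H.add_mem (hb i) this
  have hdcone : ∃ c' : Fin n → ℝ, (∀ j, 0 ≤ c' j) ∧ ∀ i, d i = ∑ j, c' j * (a j i : ℝ) := by
    refine ⟨fun j => c j + (N : ℝ), hNc, fun i => ?_⟩
    show b i + (N : ℝ) * ∑ j, (a j i : ℝ) = ∑ j, (c j + (N : ℝ)) * (a j i : ℝ)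
    rw [hc i, Finset.mul_sum, ← Finset.sum_add_distrib]
    exact Finset.sum_congr rfl fun j _ => by ring
  obtain ⟨c', hc'L, _, hc'⟩ := hGSC d hdL hdcone
  refine ⟨fun j => c' j - (N : ℝ), fun j => H.sub_mem (hc'L j) (hZ N), fun i => ?_⟩
  have : ∑ j, (c' j - (N : ℝ)) * (a j i : ℝ)
      = (∑ j, c' j * (a j i : ℝ)) - (N : ℝ) * ∑ j, (a j i : ℝ) := by
    rw [Finset.mul_sum, ← Finset.sum_sub_distrib]
    exact Finset.sum_congr rfl fun j _ => by ring
  rw [this, ← hc' i]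
  show b i = b i + (N : ℝ) * ∑ j, (a j i : ℝ) - (N : ℝ) * ∑ j, (a j i : ℝ)
  ring
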